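/- If A is a unitary symmetric complex n×n matrix (A* A = I and Aᵀ = A), then there exists a unitary matrix B such that A = B Bᵀ. -/

import Mathlib

open Matrix Polynomial

open scoped Matrix.Norms.L2Operator in
noncomputable instance matrixCStarAlgebra (n : ℕ) :
    CStarAlgebra (Matrix (Fin n) (Fin n) ℂ) := { }

theorem takagi_unitary_symmetric (n : ℕ) (A : Matrix (Fin n) (Fin n) ℂ)
    (hA : Aᴴ * A = 1) (hsym : Aᵀ = A) :
    ∃ B : Matrix (Fin n) (Fin n) ℂ, Bᴴ * B = 1 ∧ A = B * Bᵀ := by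
  have hA' : A * Aᴴ = 1 := mul_eq_one_comm.mp hA
  have hu : A ∈ unitary (Matrix (Fin n) (Fin n) ℂ) := ⟨hA, hA'⟩
  have hnormal : IsStarNormal A :=
    ⟨by rw [Commute, SemiconjBy, Matrix.star_eq_conjTranspose, hA, hA']⟩
  have hcircle : ∀ z ∈ spectrum ℂ A, ‖z‖ = 1 := by
    intro z hz
    simpa using spectrum.subset_circle_of_unitary hu hz
  set g : ℂ → ℂ := fun z => Complex.exp (Complex.log z / 2) with hg
  have hgsq : ∀ z ∈ spectrum ℂ A, g z * g z = z := by
    intro z hz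
    have hz0 : z ≠ 0 := by
      intro h; have := hcircle z hz; simp [h] at this
    rw [hg]; simp only
    rw [← Complex.exp_add, ← add_div, ← two_mul,
      mul_div_cancel_left₀ _ (two_ne_zero), Complex.exp_log hz0]
  have hlogre : ∀ z ∈ spectrum ℂ A, (Complex.log z / 2).re = 0 := by
    intro z hz
    have h1 : ‖z‖ = 1 := by
      have := hcircle z hz; simpa using this
    simp [Complex.div_re, Complex.log_re, h1]
  have hgnorm : ∀ z ∈ spectrum ℂ A, (starRingEnd ℂ) (g z) * g z = 1 := by
    intro z hz
    rw [hg]; simp only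
    rw [← Complex.exp_conj, ← Complex.exp_add, add_comm, Complex.add_conj, hlogre z hz]
    simp
  set s : Finset ℂ := (Matrix.finite_spectrum A).toFinset with hs
  have hmem : ∀ z ∈ spectrum ℂ A, z ∈ s := by
    intro z hz; rw [hs]; simpa using hz
  set p : ℂ[X] := Lagrange.interpolate s id g with hp
  have hpeval : ∀ z ∈ spectrum ℂ A, p.eval z = g z := by
    intro z hz
    simpa [hp] using Lagrange.eval_interpolate_at_node g (Set.injOn_id _) (hmem z hz)
  set B : Matrix (Fin n) (Fin n) ℂ := aeval A p with hB
  have hBt : Bᵀ = B := by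
    rw [hB]
    induction p using Polynomial.induction_on' with
    | add a b ha hb => simp [ha, hb]
    | monomial m c =>
        simp [Polynomial.aeval_monomial, Algebra.algebraMap_eq_smul_one,
          Matrix.transpose_mul, Matrix.transpose_smul, Matrix.transpose_pow, hsym,
          Matrix.transpose_one, smul_mul_assoc, mul_smul_comm, one_mul, mul_one]
  have hBcfc : B = cfc (fun z => p.eval z) A := (cfc_polynomial p A).symm
  have hBB : B * B = A := by
    rw [hBcfc, ← cfc_mul _ _ A (Polynomial.continuous p).continuousOn
      (Polynomial.continuous p).continuousOn]
    rw [cfc_congr (fun z hz => by rw [hpeval z hz, hgsq z hz]; rfl :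
      ∀ z ∈ spectrum ℂ A, p.eval z * p.eval z = id z)]
    exact cfc_id ℂ A
  have hBstar : Bᴴ * B = 1 := by
    rw [← Matrix.star_eq_conjTranspose, hBcfc, ← cfc_star, ← cfc_mul _ _ A
      ((Polynomial.continuous p).continuousOn.star)
      (Polynomial.continuous p).continuousOn]
    calc cfc (fun z => star (p.eval z) * p.eval z) A = cfc (fun _ : ℂ => (1 : ℂ)) A := by
          apply cfc_congr
          intro z hz
          simp only
          rw [hpeval z hz]
          exact hgnorm z hz
      _ = 1 := by rw [cfc_const 1 A]; simp
  exact ⟨B, hBstar, by rw [hBt, hBB]⟩
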